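/- Define ρ_L^* := min{ρ ≥ 0 : cos(√ρ L/2) − √ρ sin(√ρ L/2) = 0} for L > 0. Then ρ_L^* · L² → π² as L → ∞. -/

import Mathlib

open Filter Real

noncomputable section

/-- `ρ_L^*`: the smallest `ρ ≥ 0` such that `cos(√ρ·L/2) − √ρ·sin(√ρ·L/2) = 0`. -/
def rhoStar (L : ℝ) : ℝ :=
  sInf {ρ : ℝ | 0 ≤ ρ ∧
    Real.cos (Real.sqrt ρ * L / 2) - Real.sqrt ρ * Real.sin (Real.sqrt ρ * L / 2) = 0}

lemma rhoStar_bounds (L : ℝ) (hL : Real.pi ≤ L) :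
    (2 * Real.arccos (Real.pi / L)) ^ 2 ≤ rhoStar L * L ^ 2 ∧
      rhoStar L * L ^ 2 ≤ Real.pi ^ 2 := by
  have hL0 : 0 < L := lt_of_lt_of_le Real.pi_pos hL
  set S : Set ℝ := {ρ : ℝ | 0 ≤ ρ ∧
    Real.cos (Real.sqrt ρ * L / 2) - Real.sqrt ρ * Real.sin (Real.sqrt ρ * L / 2) = 0} with hS
  set g : ℝ → ℝ := fun ρ =>
    Real.cos (Real.sqrt ρ * L / 2) - Real.sqrt ρ * Real.sin (Real.sqrt ρ * L / 2) with hg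
  set ρ₀ : ℝ := (Real.pi / L) ^ 2 with hρ₀
  have hρ₀nn : 0 ≤ ρ₀ := sq_nonneg _
  have hsqrtρ₀ : Real.sqrt ρ₀ = Real.pi / L :=
    Real.sqrt_sq (by positivity)
  have hcont : ContinuousOn g (Set.Icc 0 ρ₀) := by
    apply Continuous.continuousOn
    fun_prop
  have hg0 : g 0 = 1 := by simp [hg]
  have hgρ₀ : g ρ₀ = -(Real.pi / L) := by
    have : Real.sqrt ρ₀ * L / 2 = Real.pi / 2 := by
      rw [hsqrtρ₀]; field_simp
    have h2 : Real.pi / L * L / 2 = Real.pi / 2 := by field_simp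
    simp only [hg, hsqrtρ₀, h2, Real.cos_pi_div_two, Real.sin_pi_div_two]
    ring
  -- IVT: zero in [0, ρ₀]
  have hzero : ∃ c ∈ Set.Icc (0:ℝ) ρ₀, g c = 0 := by
    have h0mem : (0:ℝ) ∈ Set.Icc (g ρ₀) (g 0) := by
      constructor
      · rw [hgρ₀, neg_nonpos]; positivity
      · rw [hg0]; norm_num
    have := intermediate_value_Icc' hρ₀nn hcont h0mem
    obtain ⟨c, hc, hgc⟩ := this
    exact ⟨c, hc, hgc⟩
  obtain ⟨c, hcI, hgc⟩ := hzero
  have hcS : c ∈ S := ⟨hcI.1, hgc⟩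
  have hne : S.Nonempty := ⟨c, hcS⟩
  -- lower bound
  set a : ℝ := Real.arccos (Real.pi / L) with ha
  have hπL1 : Real.pi / L ≤ 1 := (div_le_one hL0).mpr hL
  have hπL0 : 0 ≤ Real.pi / L := by positivity
  have ha0 : 0 ≤ a := Real.arccos_nonneg _
  have ha2 : a ≤ Real.pi / 2 := by
    exact Real.arccos_le_pi_div_two.mpr hπL0
  have hcosa : Real.cos a = Real.pi / L := Real.cos_arccos (by linarith) hπL1
  have hlb : ∀ ρ ∈ S, (2 * a / L) ^ 2 ≤ ρ := by
    rintro ρ ⟨hρ0, heq⟩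
    by_contra hlt
    push_neg at hlt
    have hsρ : Real.sqrt ρ < 2 * a / L := by
      have := Real.sqrt_lt_sqrt hρ0 hlt
      rwa [Real.sqrt_sq (by positivity)] at this
    set x : ℝ := Real.sqrt ρ * L / 2 with hx
    have hx0 : 0 ≤ x := by positivity
    have hxa : x < a := by
      have h1 : Real.sqrt ρ * L < (2 * a / L) * L := mul_lt_mul_of_pos_right hsρ hL0
      have h2 : (2 * a / L) * L = 2 * a := by field_simp
      rw [hx]
      rw [h2] at h1
      linarith
    -- cos x ≥ cos a, but cos x = √ρ sin x ≤ √ρ < π/L = cos a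
    have hcosx : Real.cos a ≤ Real.cos x :=
      Real.cos_le_cos_of_nonneg_of_le_pi hx0 (by linarith [Real.pi_pos]) hxa.le
    have heq' : Real.cos x = Real.sqrt ρ * Real.sin x := by linarith
    have hsin1 : Real.sin x ≤ 1 := Real.sin_le_one x
    have h3 : Real.sqrt ρ * Real.sin x ≤ Real.sqrt ρ :=
      le_trans (mul_le_mul_of_nonneg_left hsin1 (Real.sqrt_nonneg ρ)) (by linarith [Real.sqrt_nonneg ρ])
    have h4 : Real.sqrt ρ < Real.pi / L := by
      calc Real.sqrt ρ < 2 * a / L := hsρ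
      _ ≤ Real.pi / L := by
        gcongr
        linarith
    rw [hcosa] at hcosx
    linarith
  have hbdd : BddBelow S := ⟨(2 * a / L) ^ 2, hlb⟩
  have hinf_lb : (2 * a / L) ^ 2 ≤ rhoStar L := le_csInf hne hlb
  have hinf_ub : rhoStar L ≤ ρ₀ := le_trans (csInf_le hbdd hcS) hcI.2
  constructor
  · have h5 : (2 * a / L) ^ 2 * L ^ 2 ≤ rhoStar L * L ^ 2 :=
      mul_le_mul_of_nonneg_right hinf_lb (sq_nonneg L)
    have h6 : (2 * a / L) ^ 2 * L ^ 2 = (2 * a) ^ 2 := by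
      field_simp
    linarith
  · have h5 : rhoStar L * L ^ 2 ≤ ρ₀ * L ^ 2 :=
      mul_le_mul_of_nonneg_right hinf_ub (sq_nonneg L)
    have h6 : ρ₀ * L ^ 2 = Real.pi ^ 2 := by
      rw [hρ₀]; field_simp
    linarith

/-- `ρ_L^* · L² → π²` as `L → ∞`. -/
theorem rhoStar_mul_sq_tendsto_pi_sq :
    Tendsto (fun L : ℝ => rhoStar L * L ^ 2) atTop (nhds (Real.pi ^ 2)) := by
  have hlow : Tendsto (fun L : ℝ => (2 * Real.arccos (Real.pi / L)) ^ 2) atTop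
      (nhds (Real.pi ^ 2)) := by
    have h1 : Tendsto (fun L : ℝ => Real.pi / L) atTop (nhds 0) :=
      tendsto_const_nhds.div_atTop tendsto_id
    have h2 : Tendsto (fun L : ℝ => Real.arccos (Real.pi / L)) atTop
        (nhds (Real.pi / 2)) := by
      have := (Real.continuous_arccos.continuousAt (x := (0:ℝ))).tendsto.comp h1
      simpa [Real.arccos_zero, Function.comp_def] using this
    have h3 := ((h2.const_mul 2).pow 2)
    convert h3 using 2
    ring
  apply tendsto_of_tendsto_of_tendsto_of_le_of_le' hlow tendsto_const_nhds
  · filter_upwards [eventually_ge_atTop Real.pi] with L hL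
    exact (rhoStar_bounds L hL).1
  · filter_upwards [eventually_ge_atTop Real.pi] with L hL
    exact (rhoStar_bounds L hL).2
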